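/- Let M be a monoid, r a positive integer, and A = {a₁,…,aₙ} ⊆ M a finite subset such that every two-element subset of A is r-close. Then A itself is r-close. -/

import Mathlib

/-- A monoid is sharp if it has no nontrivial units. -/
def IsSharp (M : Type*) [AddCommMonoid M] : Prop := ∀ x y : M, x + y = 0 → x = 0

/-- Saturation, phrased via the divisibility order. -/
def IsSaturated (M : Type*) [AddCommMonoid M] : Prop :=
  ∀ (n : ℕ) (x y : M), 0 < n → (∃ z, n • x + z = n • y) → ∃ z, x + z = y

/-- A subset `A` of `M` is `r`-close if there are `a : M` and divisors `λ` of `r`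
with `λ • a = x` for each `x ∈ A`. -/
def RClose {M : Type*} [AddCommMonoid M] (r : ℕ) (A : Set M) : Prop :=
  ∃ a : M, ∀ x ∈ A, ∃ k : ℕ, k ∣ r ∧ k • a = x

/-- Saturated sharp cancellative monoids are torsion-free. -/
private lemma tf_aux {M : Type*} [AddCancelCommMonoid M]
    (hsharp : IsSharp M) (hsat : IsSaturated M)
    {n : ℕ} (hn : 0 < n) {x y : M} (h : n • x = n • y) : x = y := by
  obtain ⟨z, hz⟩ := hsat n x y hn ⟨0, by rw [add_zero, h]⟩
  obtain ⟨w, hw⟩ := hsat n y x hn ⟨0, by rw [add_zero, h]⟩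
  have hx : x + (z + w) = x + 0 := by rw [add_zero, ← add_assoc, hz, hw]
  have hz0 : z = 0 := hsharp z w (add_left_cancel hx)
  rw [hz0, add_zero] at hz
  exact hz

/-- Euclidean algorithm inside the monoid: if `d•a₀` and `m•a₀` are both
`R`-divisible in `M`, then so is `gcd d m • a₀`. -/
private lemma euclid_aux {M : Type*} [AddCancelCommMonoid M]
    (hsharp : IsSharp M) (hsat : IsSaturated M) (a₀ : M) {R : ℕ} (hR : 0 < R) :
    ∀ (N d m : ℕ) (z x : M), d + m ≤ N → R • z = d • a₀ → R • x = m • a₀ →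
      ∃ w : M, R • w = (Nat.gcd d m) • a₀ := by
  intro N
  induction N with
  | zero =>
    intro d m z x hN hz hx
    have hd : d = 0 := by omega
    have hm : m = 0 := by omega
    exact ⟨x, by rw [hd, hm]; simpa [hm] using hx⟩
  | succ N ih =>
    intro d m z x hN hz hx
    rcases Nat.eq_zero_or_pos d with hd | hd
    · exact ⟨x, by rw [hd, Nat.gcd_zero_left]; exact hx⟩
    rcases Nat.eq_zero_or_pos m with hm | hm
    · exact ⟨z, by rw [hm, Nat.gcd_zero_right]; exact hz⟩
    by_cases hdm : d ≤ m
    · obtain ⟨x', hx'⟩ := hsat R z x hR ⟨(m - d) • a₀, by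
        rw [hz, ← add_nsmul]
        rw [hx]
        congr 1
        omega⟩
      have hxx' : R • x' = (m - d) • a₀ := by
        have h1 : R • z + R • x' = R • x := by rw [← smul_add, hx']
        rw [hz, hx] at h1
        have h2 : m • a₀ = d • a₀ + (m - d) • a₀ := by
          rw [← add_nsmul]; congr 1; omega
        rw [h2] at h1
        exact add_left_cancel h1
      obtain ⟨w, hw⟩ := ih d (m - d) z x' (by omega) hz hxx'
      exact ⟨w, by rwa [Nat.gcd_sub_self_right hdm] at hw⟩
    · push_neg at hdm
      obtain ⟨z', hz'⟩ := hsat R x z hR ⟨(d - m) • a₀, by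
        rw [hx, ← add_nsmul, hz]
        congr 1
        omega⟩
      have hzz' : R • z' = (d - m) • a₀ := by
        have h1 : R • x + R • z' = R • z := by rw [← smul_add, hz']
        rw [hz, hx] at h1
        have h2 : d • a₀ = m • a₀ + (d - m) • a₀ := by
          rw [← add_nsmul]; congr 1; omega
        rw [h2] at h1
        exact add_left_cancel h1
      obtain ⟨w, hw⟩ := ih (d - m) m z' x (by omega) hzz' hx
      exact ⟨w, by rwa [Nat.gcd_sub_self_left hdm.le] at hw⟩

/-- If every two-element subset of a finite subset `A` of a fine saturated sharp
monoid is `r`-close, then `A` itself is `r`-close. -/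
theorem stmt_1 {M : Type*} [AddCancelCommMonoid M] (hFG : AddMonoid.FG M)
    (hsharp : IsSharp M) (hsat : IsSaturated M)
    (r : ℕ) (hr : 0 < r) (A : Finset M)
    (h2 : ∀ x ∈ A, ∀ y ∈ A, RClose r ({x, y} : Set M)) :
    RClose r (A : Set M) := by
  classical
  by_cases hA0 : ∀ x ∈ A, x = (0 : M)
  · exact ⟨0, fun x hx => ⟨1, one_dvd r, by rw [one_smul, hA0 x hx]⟩⟩
  push_neg at hA0
  obtain ⟨a₀, ha₀A, ha₀⟩ := hA0
  set R : ℕ := r * r with hRdef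
  have hR : 0 < R := Nat.mul_pos hr hr
  -- injectivity of coordinates
  have coordinj : ∀ p q : ℕ, p • a₀ = q • a₀ → p = q := by
    intro p q h
    by_contra hpq
    wlog hlt : p < q generalizing p q
    · exact this q p h.symm (Ne.symm hpq) (by omega)
    have h1 : p • a₀ + (q - p) • a₀ = p • a₀ + 0 := by
      rw [add_zero, ← add_nsmul, h]; congr 1; omega
    have h2 : (q - p) • a₀ = 0 := add_left_cancel h1
    have h3 : a₀ = 0 := by
      have hq : 0 < q - p := by omega
      exact tf_aux hsharp hsat hq (by rw [h2, smul_zero])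
    exact ha₀ h3
  -- every element of A has an integer coordinate w.r.t. a₀, at level R = r²
  have hM : ∀ x ∈ A, ∃ m : ℕ, R • x = m • a₀ := by
    intro x hx
    obtain ⟨b, hb⟩ := h2 x hx a₀ ha₀A
    obtain ⟨k, hkr, hkb⟩ := hb x (by simp)
    obtain ⟨l, hlr, hlb⟩ := hb a₀ (by simp)
    refine ⟨(r / l) * r * k, ?_⟩
    have hl : (r / l) * l = r := Nat.div_mul_cancel hlr
    calc R • x = (r * r * k) • b := by
          rw [← hkb, smul_smul]
      _ = ((r / l) * r * k) • (l • b) := by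
          rw [smul_smul]; congr 1; rw [mul_comm _ l, ← mul_assoc, ← mul_assoc, mul_comm l _, hl]
      _ = ((r / l) * r * k) • a₀ := by rw [hlb]
  -- the coordinate function
  let f : M → ℕ := fun x => if h : ∃ m : ℕ, R • x = m • a₀ then h.choose else 0
  have hf : ∀ x ∈ A, R • x = f x • a₀ := by
    intro x hx
    have h := hM x hx
    simp only [f, dif_pos h]
    exact h.choose_spec
  -- key pairwise divisibility
  have hdvd : ∀ x ∈ A, ∀ y ∈ A, f x ∣ r * f y := by
    intro x hx y hy
    obtain ⟨b, hb⟩ := h2 x hx y hy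
    obtain ⟨k, hkr, hkb⟩ := hb x (by simp)
    obtain ⟨k', hk'r, hk'b⟩ := hb y (by simp)
    have h1 : (R * k) • b = f x • a₀ := by rw [← smul_smul, hkb]; exact hf x hx
    have h2' : (R * k') • b = f y • a₀ := by rw [← smul_smul, hk'b]; exact hf y hy
    have e1 : (k' * f x) • a₀ = (k' * (R * k)) • b := by rw [mul_smul, mul_smul, h1]
    have e2 : (k * f y) • a₀ = (k * (R * k')) • b := by rw [mul_smul, mul_smul, h2']
    have h3 : (k' * f x) • a₀ = (k * f y) • a₀ := by
      rw [e1, e2]; congr 1; ring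
    have h4 : k' * f x = k * f y := coordinj _ _ h3
    calc f x ∣ k' * f x := dvd_mul_left _ _
      _ = k * f y := h4
      _ ∣ r * f y := mul_dvd_mul_right hkr _
  set t : ℕ := A.gcd f with htdef
  have ht0 : t ≠ 0 := by
    intro h0
    have h1 : R • a₀ = f a₀ • a₀ := hf a₀ ha₀A
    have h2' : f a₀ = R := (coordinj _ _ h1).symm
    have h3 : t ∣ f a₀ := Finset.gcd_dvd ha₀A
    rw [h0, zero_dvd_iff, h2'] at h3
    omega
  -- f x ∣ r * t
  have hfr : ∀ x ∈ A, f x ∣ r * t := by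
    intro x hx
    have h1 : f x ∣ A.gcd (fun y => r * f y) :=
      Finset.dvd_gcd (fun y hy => hdvd x hx y hy)
    rw [Finset.gcd_mul_left] at h1; simpa using h1
  -- build an element with coordinate t, by Finset induction + Euclid
  have hgcd : ∀ B : Finset M, (∀ x ∈ B, R • x = f x • a₀) →
      ∃ z : M, R • z = (B.gcd f) • a₀ := by
    intro B
    induction B using Finset.induction_on with
    | empty => intro _; exact ⟨0, by simp⟩
    | @insert x B hxB ih =>
      intro hB
      obtain ⟨z, hz⟩ := ih (fun y hy => hB y (Finset.mem_insert_of_mem hy))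
      have hx := hB x (Finset.mem_insert_self _ _)
      obtain ⟨w, hw⟩ := euclid_aux hsharp hsat a₀ hR (f x + B.gcd f) (f x) (B.gcd f)
        x z le_rfl hx hz
      refine ⟨w, ?_⟩
      rw [Finset.gcd_insert]
      convert hw using 2
      rfl
  obtain ⟨z, hz⟩ := hgcd A hf
  rw [← htdef] at hz
  refine ⟨z, fun x hx => ?_⟩
  have htx : t ∣ f x := Finset.gcd_dvd hx
  refine ⟨f x / t, ?_, ?_⟩
  · have h1 : (f x / t) * t ∣ r * t := by rw [Nat.div_mul_cancel htx]; exact hfr x hx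
    exact (Nat.mul_dvd_mul_iff_right (Nat.pos_of_ne_zero ht0)).mp h1
  · apply tf_aux hsharp hsat hR
    rw [smul_comm, hz, smul_smul, Nat.div_mul_cancel htx]
    exact (hf x hx).symm
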